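/- Let K be a field and let (V,G) and (W,H) be representations over K. Suppose that every element u ∈ KF which is an identity of (V,G) is also an identity of (W,H) (i.e., (W,H) belongs to the variety generated by (V,G)). If f ∈ 𝔽 is a polynomial identity of (V,G), then f is a polynomial identity of (W,H). -/

import Mathlib

/-- if every identity `u ∈ KF` of the representation `(V, G)` is also an
identity of `(W, H)` (i.e. `(W, H)` lies in the variety generated by `(V, G)`), then every
polynomial identity `f ∈ 𝔽` of `(V, G)` is a polynomial identity of `(W, H)`. -/
theorem polynomial_identity_passes_to_generated_variety
    (K : Type) [Field K]
    (G : Type) [Group G] (V : Type) [AddCommGroup V] [Module (MonoidAlgebra K G) V]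
    (H : Type) [Group H] (W : Type) [AddCommGroup W] [Module (MonoidAlgebra K H) W]
    (hvar : ∀ u : MonoidAlgebra K (FreeGroup ℕ),
      (∀ β : FreeGroup ℕ →* G, ∀ v : V, (MonoidAlgebra.mapDomainAlgHom K K β u) • v = 0) →
      (∀ β : FreeGroup ℕ →* H, ∀ w : W, (MonoidAlgebra.mapDomainAlgHom K K β u) • w = 0))
    (f : FreeAlgebra K ℕ)
    (hf : ∀ μ : FreeAlgebra K ℕ →ₐ[K] MonoidAlgebra K G, ∀ v : V, μ f • v = 0) :
    ∀ μ : FreeAlgebra K ℕ →ₐ[K] MonoidAlgebra K H, ∀ w : W, μ f • w = 0 := by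
  intro μ w
  -- index type for the finitely many group elements appearing in the images of generators
  set T := Σ i : ℕ, {h : H // h ∈ (μ (FreeAlgebra.ι K i)).coeff.support} with hT
  obtain ⟨e, he⟩ := Countable.exists_injective_nat T
  -- the substitution 𝔽 →ₐ K[F]
  set ν : FreeAlgebra K ℕ →ₐ[K] MonoidAlgebra K (FreeGroup ℕ) :=
    FreeAlgebra.lift K (fun i =>
      ∑ h ∈ (μ (FreeAlgebra.ι K i)).coeff.support.attach,
        MonoidAlgebra.single (FreeGroup.of (e ⟨i, h⟩)) ((μ (FreeAlgebra.ι K i)).coeff h.1)) with hν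
  -- key: for any group hom β, mapDomain β ∘ ν sends X i to
  -- ∑ single (β (of (e ⟨i,h⟩))) (coeff)
  have hmap : ∀ (M : Type) [Group M] (β : FreeGroup ℕ →* M) (i : ℕ),
      (MonoidAlgebra.mapDomainAlgHom K K β) (ν (FreeAlgebra.ι K i)) =
      ∑ h ∈ (μ (FreeAlgebra.ι K i)).coeff.support.attach,
        MonoidAlgebra.single (β (FreeGroup.of (e ⟨i, h⟩))) ((μ (FreeAlgebra.ι K i)).coeff h.1) := by
    intro M _ β i
    rw [hν, FreeAlgebra.lift_ι_apply]
    simp [MonoidAlgebra.mapDomainAlgHom, Finsupp.mapDomain_finset_sum, Finsupp.mapDomain_single]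
  -- u := ν f is an identity of (V, G)
  have hid : ∀ β : FreeGroup ℕ →* G, ∀ v : V,
      (MonoidAlgebra.mapDomainAlgHom K K β (ν f)) • v = 0 := by
    intro β v
    have := hf ((MonoidAlgebra.mapDomainAlgHom K K β).comp ν) v
    simpa using this
  -- the group hom picking out the original group elements
  classical
  set β₀ : FreeGroup ℕ →* H :=
    FreeGroup.lift (fun n => if hn : ∃ t : T, e t = n then hn.choose.2.1 else 1) with hβ₀
  have hβ₀e : ∀ t : T, β₀ (FreeGroup.of (e t)) = t.2.1 := by
    intro t
    rw [hβ₀, FreeGroup.lift_apply_of]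
    have hex : ∃ t' : T, e t' = e t := ⟨t, rfl⟩
    rw [dif_pos hex]
    have := he hex.choose_spec
    rw [this]
  -- mapDomain β₀ ∘ ν = μ
  have hcomp : (MonoidAlgebra.mapDomainAlgHom K K β₀).comp ν = μ := by
    apply FreeAlgebra.hom_ext
    funext i
    simp only [Function.comp_apply, AlgHom.coe_comp]
    rw [hmap H β₀ i]
    have : ∀ h ∈ (μ (FreeAlgebra.ι K i)).coeff.support.attach,
        MonoidAlgebra.single (β₀ (FreeGroup.of (e ⟨i, h⟩))) ((μ (FreeAlgebra.ι K i)).coeff h.1) =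
        MonoidAlgebra.single h.1 ((μ (FreeAlgebra.ι K i)).coeff h.1) := by
      intro h _
      rw [hβ₀e ⟨i, h⟩]
    rw [Finset.sum_congr rfl this,
      Finset.sum_attach _ (fun a => MonoidAlgebra.single a ((μ (FreeAlgebra.ι K i)).coeff a))]
    exact MonoidAlgebra.sum_coeff_single _
  have := hvar (ν f) hid β₀ w
  rwa [show MonoidAlgebra.mapDomainAlgHom K K β₀ (ν f) = μ f from
    congrArg (fun φ : FreeAlgebra K ℕ →ₐ[K] MonoidAlgebra K H => φ f) hcomp] at this
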